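/- Let N = (V, A, c) be a network, x, y, z ∈ V with y ≠ z, and f a maximum flow from y to z in N. Then f(x) ≥ λ^N_{yz}(x). -/

import Mathlib

/-!
Networks on the complete digraph: capacities `c : V → V → ℕ` with no loops
(arcs are ordered pairs of distinct vertices; loops are given capacity 0).
-/

structure Network (V : Type*) where
  c : V → V → ℕ
  no_loop : ∀ v, c v v = 0

namespace NetFlow

variable {V : Type*} [Fintype V] [DecidableEq V]

/-- `f` is a flow from `y` to `z` in `N`. -/
def IsFlow (N : Network V) (y z : V) (f : V → V → ℕ) : Prop :=
  (∀ u v, f u v ≤ N.c u v) ∧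
  (∀ x, x ≠ y → x ≠ z → ∑ u, f u x = ∑ u, f x u)

/-- The value of a flow from `y`. -/
def flowValue (f : V → V → ℕ) (y : V) : ℤ :=
  (∑ u, (f y u : ℤ)) - ∑ u, (f u y : ℤ)

/-- The maximum flow value `φ^N_{yz}`. -/
noncomputable def maxFlowValue (N : Network V) (y z : V) : ℕ :=
  sSup {m : ℕ | ∃ f, IsFlow N y z f ∧ flowValue f y = (m : ℤ)}

/-- `f` is a maximum flow from `y` to `z` in `N`. -/
def IsMaxFlow (N : Network V) (y z : V) (f : V → V → ℕ) : Prop :=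
  IsFlow N y z f ∧ flowValue f y = (maxFlowValue N y z : ℤ)

/-- The network `N_X`: capacities of arcs incident to `X` are set to zero. -/
def removeVerts (N : Network V) (X : Finset V) : Network V where
  c u v := if u ∈ X ∨ v ∈ X then 0 else N.c u v
  no_loop v := by simp [N.no_loop v]

/-- `φ^N_{yz}(X) = φ^N_{yz} - φ^{N_X}_{yz}`. -/
noncomputable def phiDrop (N : Network V) (y z : V) (X : Finset V) : ℤ :=
  (maxFlowValue N y z : ℤ) - (maxFlowValue (removeVerts N X) y z : ℤ)

/-- The (consecutive) arcs of a list of vertices. -/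
def pathArcs (p : List V) : List (V × V) := p.zip p.tail

/-- `p` is a path from `y` to `z` in `N`: at least two distinct vertices, starting at `y`,
ending at `z`, with all consecutive arcs of positive capacity. -/
def IsPath (N : Network V) (y z : V) (p : List V) : Prop :=
  2 ≤ p.length ∧ p.Nodup ∧ p.head? = some y ∧ p.getLast? = some z ∧
    p.Chain' fun u v => 1 ≤ N.c u v

/-- `p` is a cycle in `N`. -/
def IsCycle (N : Network V) (p : List V) : Prop :=
  3 ≤ p.length ∧ p.dropLast.Nodup ∧ p.head? = p.getLast? ∧
    p.Chain' fun u v => 1 ≤ N.c u v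

/-- A sequence of arc-disjoint paths from `y` to `z` in `N`: each component is a path, and
each arc `a` is used by at most `c a` components. -/
def IsPathSeq (N : Network V) (y z : V) (γ : List (List V)) : Prop :=
  (∀ p ∈ γ, IsPath N y z p) ∧
  ∀ u v : V, γ.countP (fun p => decide ((u, v) ∈ pathArcs p)) ≤ N.c u v

/-- `λ^N_{yz}`: the maximum length of a sequence of arc-disjoint paths from `y` to `z`. -/
noncomputable def maxSeqLen (N : Network V) (y z : V) : ℕ :=
  sSup {m : ℕ | ∃ γ : List (List V), IsPathSeq N y z γ ∧ γ.length = m}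

/-- `M^N_{yz}`: the sequences of arc-disjoint paths from `y` to `z` of maximum length. -/
def MaxSeqs (N : Network V) (y z : V) : Set (List (List V)) :=
  {γ | IsPathSeq N y z γ ∧ γ.length = maxSeqLen N y z}

/-- `l_X(γ)`: the number of components of `γ` having a vertex in `X`. -/
def lX (X : Finset V) (γ : List (List V)) : ℕ :=
  γ.countP fun p => p.any fun x => decide (x ∈ X)

/-- `λ^N_{yz}(X)`: the minimum of `l_X` over maximum-length sequences of arc-disjoint paths. -/
noncomputable def lambdaX (N : Network V) (y z : V) (X : Finset V) : ℕ :=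
  sInf {n : ℕ | ∃ γ ∈ MaxSeqs N y z, lX X γ = n}

/-- The flow through a vertex: `f(x) = Σ_{a exiting x} f(a)` if `x ∉ {y,z}`, `v(f)` otherwise. -/
def vertexFlow (f : V → V → ℕ) (y z x : V) : ℤ :=
  if x = y ∨ x = z then flowValue f y else ∑ u, (f x u : ℤ)

/-- `δ^N_{yz}(X)`: the minimum of `f(X) = Σ_{x∈X} f(x)` over maximum flows `f`. -/
noncomputable def deltaX (N : Network V) (y z : V) (X : Finset V) : ℕ :=
  sInf {n : ℕ | ∃ f, IsMaxFlow N y z f ∧ (∑ x ∈ X, vertexFlow f y z x) = (n : ℤ)}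

/-- The flow `f_γ` associated with a sequence of arc-disjoint paths. -/
def seqFlow (γ : List (List V)) (u v : V) : ℕ :=
  γ.countP fun p => decide ((u, v) ∈ pathArcs p)

/-- The path (or cycle) function `χ_p` of a path or cycle `p`. -/
def chi (p : List V) (u v : V) : ℕ := (pathArcs p).count (u, v)

/-- `(γ, w)` is a decomposition of the flow `f`: `γ` is a sequence of `v(f)` paths from `y`
to `z`, `w` a sequence of cycles, and `f = Σ_j χ_{γ_j} + Σ_j χ_{w_j}`. -/
def IsDecomposition (N : Network V) (y z : V) (f : V → V → ℕ)
    (γ w : List (List V)) : Prop :=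
  (∀ p ∈ γ, IsPath N y z p) ∧ (∀ q ∈ w, IsCycle N q) ∧
  (γ.length : ℤ) = flowValue f y ∧
  ∀ u v : V, f u v = (γ.map fun p => chi p u v).sum + (w.map fun q => chi q u v).sum

/-- The forward arcs of a generalized path given by vertices `p` and directions `d`. -/
def forwardArcs (p : List V) (d : List Bool) : List (V × V) :=
  ((p.zip p.tail).zip d).filterMap fun e => if e.2 then some e.1 else none

/-- The backward arcs of a generalized path given by vertices `p` and directions `d`. -/
def backwardArcs (p : List V) (d : List Bool) : List (V × V) :=
  ((p.zip p.tail).zip d).filterMap fun e => if e.2 then none else some (e.1.2, e.1.1)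

/-- `(p, d)` is a generalized path from `y` to `z`: distinct vertices `x_1 = y, …, x_m = z`
(`m ≥ 2`), the `i`-th arc being `(x_i, x_{i+1})` (forward, `d_i = true`) or `(x_{i+1}, x_i)`
(backward, `d_i = false`). -/
def IsGenPath (y z : V) (p : List V) (d : List Bool) : Prop :=
  2 ≤ p.length ∧ p.Nodup ∧ p.head? = some y ∧ p.getLast? = some z ∧
    d.length + 1 = p.length

/-- `(p, d)` is an augmenting path for `f` from `y` to `z` in `N`. -/
def IsAugPath (N : Network V) (y z : V) (f : V → V → ℕ)
    (p : List V) (d : List Bool) : Prop :=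
  IsGenPath y z p d ∧
  (∀ a ∈ forwardArcs p d, f a.1 a.2 < N.c a.1 a.2) ∧
  (∀ a ∈ backwardArcs p d, 1 ≤ f a.1 a.2)

/-- `χ_σ` for a generalized path `σ = (p, d)`: `+1` on forward arcs, `-1` on backward arcs. -/
def chiGen (p : List V) (d : List Bool) (u v : V) : ℤ :=
  ((forwardArcs p d).count (u, v) : ℤ) - ((backwardArcs p d).count (u, v) : ℤ)

/-- The full flow vitality group centrality measure `φ^N(X)`. -/
noncomputable def phiGC (N : Network V) (X : Finset V) : ℝ :=
  ∑ a ∈ Finset.univ.filter (fun a : V × V => a.1 ≠ a.2 ∧ 0 < maxFlowValue N a.1 a.2),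
    (phiDrop N a.1 a.2 X : ℝ) / (maxFlowValue N a.1 a.2 : ℝ)

/-- The full flow betweenness group centrality measure `λ^N(X)`. -/
noncomputable def lambdaGC (N : Network V) (X : Finset V) : ℝ :=
  ∑ a ∈ Finset.univ.filter (fun a : V × V => a.1 ≠ a.2 ∧ 0 < maxFlowValue N a.1 a.2),
    (lambdaX N a.1 a.2 X : ℝ) / (maxFlowValue N a.1 a.2 : ℝ)


lemma arcs_snd (p : List V) : (pathArcs p).map Prod.snd = p.tail := by
  apply List.map_snd_zip
  cases p <;> simp

lemma arcs_fst : ∀ p : List V, (pathArcs p).map Prod.fst = p.dropLast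
  | [] => rfl
  | [a] => rfl
  | a :: b :: l => by
      have ih := arcs_fst (b :: l)
      simp only [pathArcs, List.tail_cons] at ih ⊢
      simp [ih]

lemma arcs_nodup {p : List V} (hp : p.Nodup) : (pathArcs p).Nodup := by
  have h : ((pathArcs p).map Prod.fst).Nodup := by
    rw [arcs_fst]; exact hp.sublist (List.dropLast_sublist p)
  exact h.of_map _

lemma sum_count_snd (x : V) : ∀ l : List (V × V),
    ∑ u, l.count (u, x) = l.countP (fun a => a.2 = x)
  | [] => by simp
  | a :: l => by
      have ih := sum_count_snd x l
      simp only [List.count_cons, List.countP_cons, Finset.sum_add_distrib, ih]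
      congr 1
      rcases eq_or_ne a.2 x with h | h
      · subst h
        simp only [beq_iff_eq, decide_eq_true_eq]
        rw [Finset.sum_eq_single a.1]
        · simp
        · intro b _ hb; simp [Prod.ext_iff, Ne.symm hb]
        · simp
      · simp [Prod.ext_iff, h]

lemma sum_count_fst (x : V) : ∀ l : List (V × V),
    ∑ u, l.count (x, u) = l.countP (fun a => a.1 = x)
  | [] => by simp
  | a :: l => by
      have ih := sum_count_fst x l
      simp only [List.count_cons, List.countP_cons, Finset.sum_add_distrib, ih]
      congr 1
      rcases eq_or_ne a.1 x with h | h
      · subst h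
        simp only [beq_iff_eq, decide_eq_true_eq]
        rw [Finset.sum_eq_single a.2]
        · simp
        · intro b _ hb; simp [Prod.ext_iff, Ne.symm hb]
        · simp
      · simp [Prod.ext_iff, h]

lemma countP_snd (x : V) (l : List (V × V)) :
    l.countP (fun a => a.2 = x) = (l.map Prod.snd).count x := by
  rw [List.count, List.countP_map]
  apply List.countP_congr
  intro a _
  simp

lemma countP_fst (x : V) (l : List (V × V)) :
    l.countP (fun a => a.1 = x) = (l.map Prod.fst).count x := by
  rw [List.count, List.countP_map]
  apply List.countP_congr
  intro a _
  simp

lemma sum_chi_in' (p : List V) (x : V) : ∑ u, chi p u x = p.tail.count x := by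
  rw [show (∑ u, chi p u x) = ∑ u, (pathArcs p).count (u, x) from rfl,
    sum_count_snd, countP_snd, arcs_snd]

lemma sum_chi_out' (p : List V) (x : V) : ∑ u, chi p x u = p.dropLast.count x := by
  rw [show (∑ u, chi p x u) = ∑ u, (pathArcs p).count (x, u) from rfl,
    sum_count_fst, countP_fst, arcs_fst]


lemma mem_tail_iff {p : List V} {y x : V} (hnd : p.Nodup) (hy : p.head? = some y) :
    x ∈ p.tail ↔ x ∈ p ∧ x ≠ y := by
  cases p with
  | nil => simp at hy
  | cons a t =>
    simp only [List.head?_cons, Option.some_inj] at hy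
    subst hy
    simp only [List.nodup_cons] at hnd
    constructor
    · intro hx
      exact ⟨List.mem_cons_of_mem _ hx, fun h => hnd.1 (h ▸ hx)⟩
    · rintro ⟨hx, hne⟩
      rcases List.mem_cons.1 hx with h | h
      · exact absurd h hne
      · exact h

lemma mem_dropLast_iff {p : List V} {z x : V} (hnd : p.Nodup) (hz : p.getLast? = some z) :
    x ∈ p.dropLast ↔ x ∈ p ∧ x ≠ z := by
  have hne : p ≠ [] := by rintro rfl; simp at hz
  have hz' : p.getLast hne = z := by
    rwa [List.getLast?_eq_getLast hne, Option.some_inj] at hz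
  have hd : p.dropLast ++ [z] = p := by rw [← hz']; exact List.dropLast_append_getLast hne
  have hnd' : (p.dropLast ++ [z]).Nodup := by rw [hd]; exact hnd
  rw [List.nodup_append] at hnd'
  constructor
  · intro hx
    refine ⟨by rw [← hd]; exact List.mem_append_left _ hx, fun h => ?_⟩
    exact hnd'.2.2 x hx z (by simp) h
  · rintro ⟨hx, hne'⟩
    rw [← hd] at hx
    rcases List.mem_append.1 hx with h | h
    · exact h
    · simp at h; exact absurd h hne'

lemma count_tail {p : List V} {y x : V} (hnd : p.Nodup) (hy : p.head? = some y) :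
    p.tail.count x = if x ∈ p ∧ x ≠ y then 1 else 0 := by
  by_cases h : x ∈ p.tail
  · rw [if_pos ((mem_tail_iff hnd hy).1 h)]
    exact List.count_eq_one_of_mem (hnd.sublist (List.tail_sublist p)) h
  · rw [if_neg (fun hc => h ((mem_tail_iff hnd hy).2 hc))]
    exact List.count_eq_zero.2 h

lemma count_dropLast {p : List V} {z x : V} (hnd : p.Nodup) (hz : p.getLast? = some z) :
    p.dropLast.count x = if x ∈ p ∧ x ≠ z then 1 else 0 := by
  by_cases h : x ∈ p.dropLast
  · rw [if_pos ((mem_dropLast_iff hnd hz).1 h)]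
    exact List.count_eq_one_of_mem (hnd.sublist (List.dropLast_sublist p)) h
  · rw [if_neg (fun hc => h ((mem_dropLast_iff hnd hz).2 hc))]
    exact List.count_eq_zero.2 h

variable {N : Network V} {y z : V}

lemma sum_chi_in {p : List V} (hp : IsPath N y z p) (x : V) :
    ∑ u, chi p u x = if x ∈ p ∧ x ≠ y then 1 else 0 := by
  rw [sum_chi_in', count_tail hp.2.1 hp.2.2.1]

lemma sum_chi_out {p : List V} (hp : IsPath N y z p) (x : V) :
    ∑ u, chi p x u = if x ∈ p ∧ x ≠ z then 1 else 0 := by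
  rw [sum_chi_out', count_dropLast hp.2.1 hp.2.2.2.1]

lemma y_mem_path {p : List V} (hp : IsPath N y z p) : y ∈ p :=
  List.mem_of_mem_head? (hp.2.2.1 ▸ rfl)

lemma z_mem_path {p : List V} (hp : IsPath N y z p) : z ∈ p :=
  List.mem_of_mem_getLast? (hp.2.2.2.1 ▸ rfl)

lemma count_prod_eq (a : V × V) (l : List (V × V)) :
    @List.count _ instBEqProd a l = @List.count _ instBEqOfDecidableEq a l := by
  induction l with
  | nil => rfl
  | cons b t ih =>
    rw [@List.count_cons _ instBEqProd, @List.count_cons _ instBEqOfDecidableEq, ih]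
    by_cases h : b = a
    · subst h
      show _ = _ + if decide (b = b) = true then 1 else 0
      simp
    · show _ = _ + if decide (b = a) = true then 1 else 0
      simp [h]

lemma chi_eq_indicator {p : List V} (hp : IsPath N y z p) (u v : V) :
    chi p u v = if (u, v) ∈ pathArcs p then 1 else 0 := by
  by_cases h : (u, v) ∈ pathArcs p
  · rw [if_pos h]; rw [chi]; exact List.count_eq_one_of_mem (arcs_nodup hp.2.1) h
  · rw [if_neg h]; rw [chi]; exact List.count_eq_zero.2 h


section lists
variable {α : Type*}

lemma map_sum_comm (γ : List α) (g : α → V → ℕ) :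
    (γ.map fun p => ∑ u, g p u).sum = ∑ u, (γ.map fun p => g p u).sum := by
  induction γ with
  | nil => simp
  | cons p γ ih => simp [ih, Finset.sum_add_distrib]

lemma countP_le_map_sum (γ : List α) (q : α → Bool) (g : α → ℕ)
    (h : ∀ p ∈ γ, q p → 1 ≤ g p) : γ.countP q ≤ (γ.map g).sum := by
  induction γ with
  | nil => simp
  | cons p γ ih =>
    rw [List.countP_cons, List.map_cons, List.sum_cons]
    have h1 := ih fun a ha hq => h a (List.mem_cons_of_mem _ ha) hq
    by_cases hq : q p = true
    · rw [if_pos hq]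
      have := h p List.mem_cons_self hq
      omega
    · rw [if_neg hq]
      omega

lemma map_sum_eq_countP (γ : List α) (q : α → Bool) (g : α → ℕ)
    (h : ∀ p ∈ γ, g p = if q p then 1 else 0) : (γ.map g).sum = γ.countP q := by
  induction γ with
  | nil => simp
  | cons p γ ih =>
    rw [List.countP_cons, List.map_cons, List.sum_cons,
      ih fun a ha => h a (List.mem_cons_of_mem _ ha), h p List.mem_cons_self]
    exact Nat.add_comm _ _

end lists

lemma seqFlow_eq_map_sum {γ : List (List V)} (h : ∀ p ∈ γ, IsPath N y z p) (u v : V) :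
    seqFlow γ u v = (γ.map fun p => chi p u v).sum := by
  refine (map_sum_eq_countP γ _ _ fun p hp => ?_).symm
  rw [chi_eq_indicator (h p hp)]
  by_cases hm : (u, v) ∈ pathArcs p <;> simp [hm]

lemma seqFlow_in (hyz : y ≠ z) {γ : List (List V)} (h : ∀ p ∈ γ, IsPath N y z p) (x : V) :
    ∑ u, seqFlow γ u x = (γ.map fun p => if x ∈ p ∧ x ≠ y then 1 else 0).sum := by
  have : ∀ u, seqFlow γ u x = (γ.map fun p => chi p u x).sum :=
    fun u => seqFlow_eq_map_sum h u x
  rw [Finset.sum_congr rfl fun u _ => this u, ← map_sum_comm]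
  congr 1
  exact List.map_congr_left fun p hp => sum_chi_in (h p hp) x

lemma seqFlow_out (hyz : y ≠ z) {γ : List (List V)} (h : ∀ p ∈ γ, IsPath N y z p) (x : V) :
    ∑ u, seqFlow γ x u = (γ.map fun p => if x ∈ p ∧ x ≠ z then 1 else 0).sum := by
  have : ∀ u, seqFlow γ x u = (γ.map fun p => chi p x u).sum :=
    fun u => seqFlow_eq_map_sum h x u
  rw [Finset.sum_congr rfl fun u _ => this u, ← map_sum_comm]
  congr 1
  exact List.map_congr_left fun p hp => sum_chi_out (h p hp) x

lemma seqFlow_isFlow (hyz : y ≠ z) {γ : List (List V)} (h : IsPathSeq N y z γ) :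
    IsFlow N y z (seqFlow γ) ∧ flowValue (seqFlow γ) y = γ.length := by
  refine ⟨⟨fun u v => h.2 u v, fun x hx hz => ?_⟩, ?_⟩
  · rw [seqFlow_in hyz h.1, seqFlow_out hyz h.1]
    congr 1
    exact List.map_congr_left fun p _ => by simp [hx, hz]
  · rw [flowValue]
    have h1 : ∑ u, seqFlow γ y u = γ.length := by
      rw [seqFlow_out hyz h.1]
      have : ∀ p ∈ γ, (if y ∈ p ∧ y ≠ z then 1 else 0) = 1 :=
        fun p hp => by simp [y_mem_path (h.1 p hp), hyz]
      rw [List.map_congr_left this]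
      simp
    have h2 : ∑ u, seqFlow γ u y = 0 := by
      rw [seqFlow_in hyz h.1]
      have : ∀ p ∈ γ, (if y ∈ p ∧ y ≠ y then 1 else 0) = 0 := fun p hp => by simp
      rw [List.map_congr_left this]
      simp
    rw [← Nat.cast_sum, ← Nat.cast_sum, h1, h2]
    simp


section chains
variable {r : V → V → Prop}

lemma not_nodup_split {α : Type*} : ∀ {l : List α}, ¬ l.Nodup →
    ∃ (a : α) (s t u : List α), l = s ++ a :: (t ++ a :: u)
  | [], h => absurd List.nodup_nil h
  | b :: l', h => by
      by_cases hb : b ∈ l'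
      · obtain ⟨t, u, rfl⟩ := List.append_of_mem hb
        exact ⟨b, [], t, u, rfl⟩
      · have h' : ¬ l'.Nodup := fun hn => h (List.nodup_cons.2 ⟨hb, hn⟩)
        obtain ⟨a, s, t, u, rfl⟩ := not_nodup_split h'
        exact ⟨a, b :: s, t, u, rfl⟩

lemma chain'_arc : ∀ {p : List V}, p.Chain' r → ∀ a ∈ pathArcs p, r a.1 a.2
  | [], _, a, ha => by simp [pathArcs] at ha
  | [_], _, a, ha => by simp [pathArcs] at ha
  | x :: y' :: l, h, a, ha => by
      simp only [List.Chain', List.isChain_cons_cons] at h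
      rcases List.mem_cons.1 ha with rfl | ha'
      · exact h.1
      · exact chain'_arc h.2 a ha'

lemma shrink_chain {y z : V} : ∀ n (p : List V), p.length ≤ n → p.Chain' r →
    p.head? = some y → p.getLast? = some z →
    ∃ q : List V, q.Chain' r ∧ q.head? = some y ∧ q.getLast? = some z ∧ q.Nodup
  | 0, p, hn, _, hy, _ => by
      cases p
      · simp at hy
      · simp at hn
  | n + 1, p, hn, hc, hy, hz => by
      by_cases hnd : p.Nodup
      · exact ⟨p, hc, hy, hz, hnd⟩
      · obtain ⟨a, s, t, u, rfl⟩ := not_nodup_split hnd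
        refine shrink_chain n (s ++ a :: u) ?_ ?_ ?_ ?_
        · have := hn
          simp only [List.length_append, List.length_cons] at this ⊢
          omega
        · have h1 : ((s ++ [a]) ++ (t ++ a :: u)).Chain' r := by
            simpa using hc
          have h2 : (a :: u).Chain' r := by
            have : (a :: u).IsSuffix ((s ++ [a] ++ t) ++ a :: u) := ⟨_, rfl⟩
            refine h1.suffix ?_
            simpa using this
          have h3 : (s ++ [a]).Chain' r := h1.prefix ⟨_, rfl⟩
          have : ((s ++ [a]) ++ u).Chain' r := by
            refine h3.append (List.isChain_cons.1 h2).2 ?_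
            intro b hb c hcu
            rw [List.getLast?_concat] at hb
            obtain rfl : a = b := by simpa using hb
            exact (List.isChain_cons.1 h2).1 c hcu
          simpa using this
        · rcases s with _ | ⟨b, s'⟩
          · simpa using hy
          · simpa using hy
        · rw [List.getLast?_append] at hz ⊢
          have h5 : (a :: (t ++ a :: u)).getLast? = (a :: u).getLast? := by
            rw [show a :: (t ++ a :: u) = (a :: t) ++ (a :: u) from rfl,
              List.getLast?_append]
            cases hu : (a :: u).getLast? with
            | none => simp at hu
            | some w => rfl
          rw [h5] at hz
          exact hz

lemma exists_nodup_path_of_reach {y z : V} (hyz : y ≠ z)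
    (h : Relation.ReflTransGen r y z) :
    ∃ p : List V, p.Chain' r ∧ p.head? = some y ∧ p.getLast? = some z ∧
      p.Nodup ∧ 2 ≤ p.length := by
  obtain ⟨l, hl, hlast⟩ := List.exists_isChain_cons_of_relationReflTransGen h
  have hc : (y :: l).Chain' r := hl
  have hy : (y :: l).head? = some y := rfl
  have hz : (y :: l).getLast? = some z := by
    rw [List.getLast?_eq_getLast (by simp), hlast]
  obtain ⟨q, hqc, hqy, hqz, hqnd⟩ :=
    shrink_chain (y :: l).length (y :: l) le_rfl hc hy hz
  refine ⟨q, hqc, hqy, hqz, hqnd, ?_⟩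
  match q, hqy, hqz with
  | [], hqy, _ => simp at hqy
  | [a], hqy, hqz => 
      simp only [List.head?_cons, Option.some_inj] at hqy
      simp only [List.getLast?_singleton, Option.some_inj] at hqz
      exact absurd (hqy ▸ hqz ▸ rfl : y = z) hyz
  | a :: b :: l, _, _ => simp

end chains


lemma reach_of_pos_value {f : V → V → ℕ} (hyz : y ≠ z) (hf : IsFlow N y z f)
    (hv : 1 ≤ flowValue f y) :
    Relation.ReflTransGen (fun u v => 1 ≤ f u v) y z := by
  classical
  set r : V → V → Prop := fun u v => 1 ≤ f u v with hr
  by_contra hreach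
  set S : Finset V := Finset.univ.filter (fun v => Relation.ReflTransGen r y v) with hS
  have hyS : y ∈ S := by
    simp only [hS, Finset.mem_filter, Finset.mem_univ, true_and]
    exact Relation.ReflTransGen.refl
  have hzS : z ∉ S := by simp [hS, hreach]
  have hstep : ∀ u ∈ S, ∀ v, 1 ≤ f u v → v ∈ S := by
    intro u hu v huv
    simp only [hS, Finset.mem_filter, Finset.mem_univ, true_and] at hu ⊢
    exact hu.tail huv
  have key1 : ∑ u ∈ S, ((∑ v, (f u v : ℤ)) - ∑ v, (f v u : ℤ)) = flowValue f y := by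
    rw [Finset.sum_eq_single_of_mem y hyS]
    · rfl
    · intro u hu hne
      have huz : u ≠ z := fun h => hzS (h ▸ hu)
      have h0 := hf.2 u hne huz
      have : (∑ v, (f v u : ℤ)) = ∑ v, (f u v : ℤ) := by exact_mod_cast h0
      omega
  have key2 : ∑ u ∈ S, ((∑ v, (f u v : ℤ)) - ∑ v, (f v u : ℤ)) =
      (∑ u ∈ S, ∑ v ∈ Sᶜ, (f u v : ℤ)) - ∑ u ∈ S, ∑ v ∈ Sᶜ, (f v u : ℤ) := by
    have e1 : ∀ u, (∑ v, (f u v : ℤ)) = ∑ v ∈ S, (f u v : ℤ) + ∑ v ∈ Sᶜ, (f u v : ℤ) :=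
      fun u => (Finset.sum_add_sum_compl S _).symm
    have e2 : ∀ u, (∑ v, (f v u : ℤ)) = ∑ v ∈ S, (f v u : ℤ) + ∑ v ∈ Sᶜ, (f v u : ℤ) :=
      fun u => (Finset.sum_add_sum_compl S _).symm
    simp only [e1, e2]
    rw [Finset.sum_sub_distrib]
    rw [Finset.sum_add_distrib, Finset.sum_add_distrib]
    have e3 : ∑ u ∈ S, ∑ v ∈ S, (f u v : ℤ) = ∑ u ∈ S, ∑ v ∈ S, (f v u : ℤ) :=
      Finset.sum_comm
    rw [e3]
    ring
  have hcut : ∑ u ∈ S, ∑ v ∈ Sᶜ, (f u v : ℤ) = 0 := by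
    refine Finset.sum_eq_zero fun u hu => Finset.sum_eq_zero fun v hv' => ?_
    by_contra hne
    have hpos : 1 ≤ f u v := by
      rcases Nat.eq_zero_or_pos (f u v) with h | h
      · exact absurd (by exact_mod_cast h : ((f u v : ℕ) : ℤ) = 0) hne
      · exact h
    exact (Finset.mem_compl.1 hv') (hstep u hu v hpos)
  have hnonneg : 0 ≤ ∑ u ∈ S, ∑ v ∈ Sᶜ, (f v u : ℤ) :=
    Finset.sum_nonneg fun u _ => Finset.sum_nonneg fun v _ => by positivity
  rw [key2, hcut] at key1
  omega

lemma exists_path_of_pos_value {f : V → V → ℕ} (hyz : y ≠ z) (hf : IsFlow N y z f)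
    (hv : 1 ≤ flowValue f y) :
    ∃ p, IsPath N y z p ∧ ∀ a ∈ pathArcs p, 1 ≤ f a.1 a.2 := by
  obtain ⟨p, hc, hy, hz, hnd, hlen⟩ :=
    exists_nodup_path_of_reach hyz (reach_of_pos_value hyz hf hv)
  refine ⟨p, ⟨hlen, hnd, hy, hz, hc.imp fun {u v} h => le_trans h (hf.1 u v)⟩,
    chain'_arc hc⟩


lemma flow_sub {f : V → V → ℕ} (hyz : y ≠ z) (hf : IsFlow N y z f) {p : List V}
    (hp : IsPath N y z p) (harc : ∀ a ∈ pathArcs p, 1 ≤ f a.1 a.2) :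
    (∀ u v, chi p u v ≤ f u v) ∧ IsFlow N y z (fun u v => f u v - chi p u v) ∧
      flowValue (fun u v => f u v - chi p u v) y = flowValue f y - 1 := by
  have hle : ∀ u v, chi p u v ≤ f u v := by
    intro u v
    rw [chi_eq_indicator hp]
    by_cases hm : (u, v) ∈ pathArcs p
    · rw [if_pos hm]; exact harc (u, v) hm
    · rw [if_neg hm]; exact Nat.zero_le _
  have hsubin : ∀ x, ∑ u, (f u x - chi p u x) = ∑ u, f u x - ∑ u, chi p u x :=
    fun x => Finset.sum_tsub_distrib _ fun u _ => hle u x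
  have hsubout : ∀ x, ∑ u, (f x u - chi p x u) = ∑ u, f x u - ∑ u, chi p x u :=
    fun x => Finset.sum_tsub_distrib _ fun u _ => hle x u
  have hchile_in : ∀ x, ∑ u, chi p u x ≤ ∑ u, f u x :=
    fun x => Finset.sum_le_sum fun u _ => hle u x
  have hchile_out : ∀ x, ∑ u, chi p x u ≤ ∑ u, f x u :=
    fun x => Finset.sum_le_sum fun u _ => hle x u
  refine ⟨hle, ⟨fun u v => le_trans (Nat.sub_le _ _) (hf.1 u v), fun x hx hz => ?_⟩, ?_⟩
  · rw [hsubin, hsubout, hf.2 x hx hz, sum_chi_in hp, sum_chi_out hp]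
    have : (if x ∈ p ∧ x ≠ y then 1 else 0) = (if x ∈ p ∧ x ≠ z then 1 else 0) := by
      by_cases hm : x ∈ p <;> simp [hm, hx, hz]
    rw [this]
  · have h1 : ∑ u, chi p y u = 1 := by
      rw [sum_chi_out hp]
      simp [y_mem_path hp, hyz]
    have h2 : ∑ u, chi p u y = 0 := by
      rw [sum_chi_in hp]
      simp
    have h3 : 1 ≤ ∑ u, f y u := h1 ▸ hchile_out y
    rw [flowValue, flowValue, ← Nat.cast_sum, ← Nat.cast_sum, ← Nat.cast_sum, ← Nat.cast_sum,
      hsubin, hsubout, h1, h2]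
    have h4 : ∑ u, f u y - 0 = ∑ u, f u y := Nat.sub_zero _
    rw [h4]
    omega

lemma exists_decomp (hyz : y ≠ z) :
    ∀ (n : ℕ) (f : V → V → ℕ), IsFlow N y z f → flowValue f y = n →
    ∃ γ : List (List V), (∀ p ∈ γ, IsPath N y z p) ∧ γ.length = n ∧
      ∀ u v, (γ.map fun p => chi p u v).sum ≤ f u v
  | 0, f, hf, hv => ⟨[], by simp, rfl, fun u v => by simp⟩
  | n + 1, f, hf, hv => by
      obtain ⟨p, hp, harc⟩ := exists_path_of_pos_value hyz hf (by omega)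
      obtain ⟨hle, hf', hv'⟩ := flow_sub hyz hf hp harc
      have hv'' : flowValue (fun u v => f u v - chi p u v) y = n := by omega
      obtain ⟨γ, hγ, hlen, hsum⟩ := exists_decomp hyz n _ hf' hv''
      refine ⟨p :: γ, ?_, by simp [hlen], fun u v => ?_⟩
      · intro q hq
        rcases List.mem_cons.1 hq with rfl | hq'
        · exact hp
        · exact hγ q hq'
      · have := hsum u v
        have := hle u v
        simp only [List.map_cons, List.sum_cons]
        omega



variable {f : V → V → ℕ}

lemma value_le_cap (hf : IsFlow N y z f) {m : ℕ} (hm : flowValue f y = (m : ℤ)) :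
    m ≤ ∑ u, N.c y u := by
  have h1 : (m : ℤ) ≤ ∑ u, (f y u : ℤ) := by
    rw [← hm, flowValue]
    have : 0 ≤ ∑ u, (f u y : ℤ) := Finset.sum_nonneg fun u _ => by positivity
    omega
  have h2 : ∑ u, (f y u : ℤ) ≤ ∑ u, (N.c y u : ℤ) :=
    Finset.sum_le_sum fun u _ => by exact_mod_cast hf.1 y u
  have : (m : ℤ) ≤ ((∑ u, N.c y u : ℕ) : ℤ) := by
    rw [Nat.cast_sum]; omega
  exact_mod_cast this

lemma flowSet_bdd : BddAbove {m : ℕ | ∃ f, IsFlow N y z f ∧ flowValue f y = (m : ℤ)} :=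
  ⟨∑ u, N.c y u, fun m ⟨f, hf, hm⟩ => value_le_cap hf hm⟩

lemma seqSet_subset_flowSet (hyz : y ≠ z) :
    {m : ℕ | ∃ γ : List (List V), IsPathSeq N y z γ ∧ γ.length = m} ⊆
      {m : ℕ | ∃ f, IsFlow N y z f ∧ flowValue f y = (m : ℤ)} := by
  rintro m ⟨γ, hγ, rfl⟩
  obtain ⟨h1, h2⟩ := seqFlow_isFlow hyz hγ
  exact ⟨seqFlow γ, h1, h2⟩

lemma isPathSeq_of_decomp {γ : List (List V)} (hγ : ∀ p ∈ γ, IsPath N y z p)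
    (hsum : ∀ u v, (γ.map fun p => chi p u v).sum ≤ f u v) (hc : ∀ u v, f u v ≤ N.c u v) :
    IsPathSeq N y z γ := by
  refine ⟨hγ, fun u v => ?_⟩
  refine le_trans (le_trans (countP_le_map_sum γ _ (fun p => chi p u v) fun p hp hq => ?_)
    (hsum u v)) (hc u v)
  show 1 ≤ chi p u v
  rw [chi_eq_indicator (hγ p hp), if_pos (by simpa using hq)]

lemma maxSeqLen_eq (hyz : y ≠ z) (hf : IsMaxFlow N y z f) :
    maxSeqLen N y z = maxFlowValue N y z := by
  have hne : {m : ℕ | ∃ γ : List (List V), IsPathSeq N y z γ ∧ γ.length = m}.Nonempty :=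
    ⟨0, [], ⟨by simp, fun u v => by simp⟩, rfl⟩
  obtain ⟨γ, hγ, hlen, hsum⟩ := exists_decomp hyz (maxFlowValue N y z) f hf.1 hf.2
  have hseq : IsPathSeq N y z γ := isPathSeq_of_decomp hγ hsum hf.1.1
  have hbdd : BddAbove {m : ℕ | ∃ γ : List (List V), IsPathSeq N y z γ ∧ γ.length = m} :=
    flowSet_bdd.mono (seqSet_subset_flowSet hyz)
  refine le_antisymm (csSup_le hne fun m hm => ?_) (le_csSup hbdd ⟨γ, hseq, hlen⟩)
  exact le_csSup flowSet_bdd (seqSet_subset_flowSet hyz hm)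

end NetFlow

/-- for every maximum flow `f` from `y` to `z`, `f(x) ≥ λ^N_{yz}(x)`. -/
theorem maxFlow_ge_lambda_at_vertex {V : Type*} [Fintype V] [DecidableEq V]
    (hV : 2 ≤ Fintype.card V) (N : Network V) (x y z : V) (hyz : y ≠ z)
    (f : V → V → ℕ) (hf : NetFlow.IsMaxFlow N y z f) :
    (NetFlow.lambdaX N y z {x} : ℤ) ≤ NetFlow.vertexFlow f y z x := by
  classical
  obtain ⟨γ, hγ, hlen, hsum⟩ :=
    NetFlow.exists_decomp hyz (NetFlow.maxFlowValue N y z) f hf.1 hf.2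
  have hseq : NetFlow.IsPathSeq N y z γ := NetFlow.isPathSeq_of_decomp hγ hsum hf.1.1
  have hmem : γ ∈ NetFlow.MaxSeqs N y z :=
    ⟨hseq, by rw [hlen, NetFlow.maxSeqLen_eq hyz hf]⟩
  have hlam : NetFlow.lambdaX N y z {x} ≤ NetFlow.lX {x} γ :=
    Nat.sInf_le ⟨γ, hmem, rfl⟩
  have hlX : NetFlow.lX {x} γ = γ.countP fun p => decide (x ∈ p) := by
    rw [NetFlow.lX]
    apply List.countP_congr
    intro p _
    simp
  rw [NetFlow.vertexFlow]
  by_cases hxyz : x = y ∨ x = z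
  · rw [if_pos hxyz, hf.2]
    have h1 : NetFlow.lX {x} γ ≤ γ.length := List.countP_le_length
    have h2 : (NetFlow.lambdaX N y z {x} : ℕ) ≤ NetFlow.maxFlowValue N y z := by
      rw [← hlen]; omega
    exact_mod_cast h2
  · push_neg at hxyz
    rw [if_neg (by tauto)]
    have hb : NetFlow.lX {x} γ ≤ ∑ u, f x u := by
      rw [hlX]
      refine le_trans (NetFlow.countP_le_map_sum γ _ (fun p => ∑ u, NetFlow.chi p x u)
        fun p hp hq => ?_) ?_
      · have hxp : x ∈ p := by simpa using hq
        show 1 ≤ ∑ u, NetFlow.chi p x u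
        rw [NetFlow.sum_chi_out (hγ p hp), if_pos ⟨hxp, hxyz.2⟩]
      · rw [NetFlow.map_sum_comm]
        exact Finset.sum_le_sum fun u _ => hsum x u
    have : (NetFlow.lambdaX N y z {x} : ℕ) ≤ ∑ u, f x u := le_trans hlam hb
    calc (NetFlow.lambdaX N y z {x} : ℤ) ≤ ((∑ u, f x u : ℕ) : ℤ) := by exact_mod_cast this
      _ = ∑ u, (f x u : ℤ) := by rw [Nat.cast_sum]
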